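/- arXiv:1604.07814 — 2 statements merged into one kernel-verified Lean document; each statement's English description precedes it below -/
import Mathlib

section
/- Suppose f is quadratic, f(x) = xᵀQx + qᵀx with Q symmetric positive semidefinite. If c > ((m−1)/(2m−1)) · 2 λ_max(Q_z), then the sequence (x_k) generated by the regularized Jacobi iteration satisfies dist(x_k, X*) → 0 as k → ∞, where X* is the (nonempty) set of minimizers of f over X. -/
open Matrix Filter Topology
open scoped RealInnerProductSpace

noncomputable section

/-- The product decision space of `m` agents, agent `i` having an `n i`-dimensional
Euclidean decision vector; equipped with the (ℓ²-of-ℓ²) Euclidean norm. -/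
abbrev JVec (m : ℕ) (n : Fin m → ℕ) :=
  PiLp 2 (fun i : Fin m => EuclideanSpace ℝ (Fin (n i)))

/-- `upd x i z` is the vector `(z, x^{-i})`: `x` with its `i`-th block replaced by `z`. -/
def upd {m : ℕ} {n : Fin m → ℕ} (x : JVec m n) (i : Fin m)
    (z : EuclideanSpace ℝ (Fin (n i))) : JVec m n :=
  WithLp.toLp 2 (Function.update x i z)
/-- The index set of the stacked vector `x = (x^1, …, x^m)`. -/
abbrev JIdx (m : ℕ) (n : Fin m → ℕ) := Σ i : Fin m, Fin (n i)

/-- Flatten a block vector into a plain vector indexed by `JIdx m n`. -/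
def flat {m : ℕ} {n : Fin m → ℕ} (x : JVec m n) : JIdx m n → ℝ :=
  fun p => x p.1 p.2

/-- The block-diagonal part `Q_d` of `Q`: equal to `Q` on entries whose row and column
indices lie in the same agent block, and zero elsewhere. -/
def blockDiagPart {m : ℕ} {n : Fin m → ℕ} (Q : Matrix (JIdx m n) (JIdx m n) ℝ) :
    Matrix (JIdx m n) (JIdx m n) ℝ :=
  Matrix.of fun p q => if p.1 = q.1 then Q p q else 0

/-- The quadratic objective `f(x) = xᵀ Q x + qᵀ x`. -/
def quadF {m : ℕ} {n : Fin m → ℕ} (Q : Matrix (JIdx m n) (JIdx m n) ℝ)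
    (q : JIdx m n → ℝ) (x : JVec m n) : ℝ :=
  flat x ⬝ᵥ (Q *ᵥ flat x) + q ⬝ᵥ flat x

/-- The largest eigenvalue of a real symmetric (Hermitian) matrix. -/
noncomputable def maxEig {ι : Type*} [Fintype ι] [DecidableEq ι]
    {A : Matrix ι ι ℝ} (hA : A.IsHermitian) : ℝ :=
  ⨆ p, hA.eigenvalues p

section aux
variable {m : ℕ} {n : Fin m → ℕ}

/-- embed a block vector into the flat index space -/
def eblk (i : Fin m) (u : EuclideanSpace ℝ (Fin (n i))) : JIdx m n → ℝ :=
  flat (upd (0 : JVec m n) i u)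

lemma eblk_apply_ne {i : Fin m} {u : EuclideanSpace ℝ (Fin (n i))} {p : JIdx m n}
    (h : p.1 ≠ i) : eblk i u p = 0 := by
  simp [eblk, flat, upd, Function.update_of_ne h]

lemma eblk_apply_eq {i : Fin m} {u : EuclideanSpace ℝ (Fin (n i))} (a : Fin (n i)) :
    eblk (n := n) i u ⟨i, a⟩ = u a := by
  simp [eblk, flat, upd]

lemma flat_upd (x : JVec m n) (i : Fin m) (z : EuclideanSpace ℝ (Fin (n i))) :
    flat (upd x i z) = flat x + eblk i (z - x i) := by
  funext p; rcases p with ⟨j, a⟩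
  by_cases h : j = i
  · subst h
    simp [flat, upd, eblk, Pi.add_apply]
  · rw [Pi.add_apply, eblk_apply_ne h]
    simp [flat, upd, Function.update_of_ne h]

end aux

section aux2
variable {m : ℕ} {n : Fin m → ℕ}

lemma eblk_smul (i : Fin m) (t : ℝ) (u : EuclideanSpace ℝ (Fin (n i))) :
    eblk (n := n) i (t • u) = t • eblk i u := by
  funext p; rcases p with ⟨j, a⟩
  by_cases h : j = i
  · subst h; simp [eblk_apply_eq]
  · rw [Pi.smul_apply, eblk_apply_ne h, eblk_apply_ne h, smul_zero]

lemma sum_eblk (x y : JVec m n) :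
    ∑ i, eblk i (y i - x i) = flat y - flat x := by
  funext p
  rw [Finset.sum_apply]
  rw [Finset.sum_eq_single p.1]
  · rcases p with ⟨j, a⟩
    simp [eblk_apply_eq, flat]
  · intro i _ hi
    exact eblk_apply_ne (Ne.symm hi)
  · intro h; exact absurd (Finset.mem_univ _) h

lemma dot_sum (v : JIdx m n → ℝ) (w : Fin m → (JIdx m n → ℝ)) :
    v ⬝ᵥ (∑ i, w i) = ∑ i, v ⬝ᵥ w i := by
  simp only [dotProduct, Finset.sum_apply, Finset.mul_sum]
  exact Finset.sum_comm

lemma mulVec_sum' (Q : Matrix (JIdx m n) (JIdx m n) ℝ) (w : Fin m → (JIdx m n → ℝ)) :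
    Q *ᵥ (∑ i, w i) = ∑ i, Q *ᵥ w i := by
  simp only [← Matrix.mulVecLin_apply]
  exact map_sum Q.mulVecLin w Finset.univ

lemma dot_symm (Q : Matrix (JIdx m n) (JIdx m n) ℝ) (hQ : Q.IsHermitian)
    (v w : JIdx m n → ℝ) : v ⬝ᵥ Q *ᵥ w = w ⬝ᵥ Q *ᵥ v := by
  have hsym : ∀ p r, Q r p = Q p r := fun p r => by
    have := congrFun (congrFun hQ p) r
    simpa [Matrix.conjTranspose_apply] using this
  simp only [dotProduct, Matrix.mulVec, Finset.mul_sum]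
  rw [Finset.sum_comm]
  refine Finset.sum_congr rfl fun r _ => Finset.sum_congr rfl fun p _ => ?_
  rw [hsym p r]; ring

/-- the "gradient" linear part -/
def gQ (Q : Matrix (JIdx m n) (JIdx m n) ℝ) (q : JIdx m n → ℝ)
    (v w : JIdx m n → ℝ) : ℝ := 2 * (v ⬝ᵥ Q *ᵥ w) + q ⬝ᵥ w

lemma quad_expand (Q : Matrix (JIdx m n) (JIdx m n) ℝ) (q : JIdx m n → ℝ)
    (hQ : Q.IsHermitian) (v w : JIdx m n → ℝ) :
    (v + w) ⬝ᵥ Q *ᵥ (v + w) + q ⬝ᵥ (v + w)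
      = (v ⬝ᵥ Q *ᵥ v + q ⬝ᵥ v) + gQ Q q v w + w ⬝ᵥ Q *ᵥ w := by
  rw [Matrix.mulVec_add]
  simp only [dotProduct_add, add_dotProduct, gQ]
  rw [dot_symm Q hQ w v]
  ring

lemma quadF_upd (Q : Matrix (JIdx m n) (JIdx m n) ℝ) (q : JIdx m n → ℝ)
    (hQ : Q.IsHermitian) (x : JVec m n) (i : Fin m) (z : EuclideanSpace ℝ (Fin (n i))) :
    quadF Q q (upd x i z) = quadF Q q x + gQ Q q (flat x) (eblk i (z - x i))
      + (eblk i (z - x i)) ⬝ᵥ Q *ᵥ (eblk i (z - x i)) := by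
  unfold quadF
  rw [flat_upd, quad_expand Q q hQ]

lemma quadF_diff (Q : Matrix (JIdx m n) (JIdx m n) ℝ) (q : JIdx m n → ℝ)
    (hQ : Q.IsHermitian) (x y : JVec m n) :
    quadF Q q y = quadF Q q x + gQ Q q (flat x) (flat y - flat x)
      + (flat y - flat x) ⬝ᵥ Q *ᵥ (flat y - flat x) := by
  have h : flat y = flat x + (flat y - flat x) := by abel
  conv_lhs => rw [quadF, h]
  rw [quad_expand Q q hQ]
  rfl

lemma gQ_smul (Q : Matrix (JIdx m n) (JIdx m n) ℝ) (q : JIdx m n → ℝ)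
    (v : JIdx m n → ℝ) (t : ℝ) (w : JIdx m n → ℝ) :
    gQ Q q v (t • w) = t * gQ Q q v w := by
  simp only [gQ, Matrix.mulVec_smul, dotProduct_smul, smul_eq_mul]
  ring

lemma gQ_sum (Q : Matrix (JIdx m n) (JIdx m n) ℝ) (q : JIdx m n → ℝ)
    (v : JIdx m n → ℝ) (w : Fin m → (JIdx m n → ℝ)) :
    ∑ i, gQ Q q v (w i) = gQ Q q v (∑ i, w i) := by
  simp only [gQ, mulVec_sum', dot_sum, Finset.mul_sum, Finset.sum_add_distrib]

end aux2

section aux3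
variable {m : ℕ} {n : Fin m → ℕ}

lemma eblk_diag (x y : JVec m n) (p : JIdx m n) :
    eblk p.1 (y p.1 - x p.1) p = flat y p - flat x p := by
  rcases p with ⟨j, a⟩
  simp [eblk_apply_eq, flat]

lemma sum_quad_blocks (Q : Matrix (JIdx m n) (JIdx m n) ℝ) (x y : JVec m n) :
    ∑ i, (eblk i (y i - x i)) ⬝ᵥ Q *ᵥ (eblk i (y i - x i))
      = (flat y - flat x) ⬝ᵥ (blockDiagPart Q) *ᵥ (flat y - flat x) := by
  set d : JIdx m n → ℝ := flat y - flat x with hd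
  have hdp : ∀ p : JIdx m n, eblk p.1 (y p.1 - x p.1) p = d p := fun p => eblk_diag x y p
  simp only [dotProduct, Matrix.mulVec, blockDiagPart, Matrix.of_apply]
  rw [Finset.sum_comm]
  refine Finset.sum_congr rfl fun p _ => ?_
  rw [Finset.sum_eq_single p.1]
  · rw [hdp p, Finset.mul_sum, Finset.mul_sum]
    refine Finset.sum_congr rfl fun r _ => ?_
    by_cases h : p.1 = r.1
    · rw [if_pos h, h, hdp r]
    · rw [if_neg h, eblk_apply_ne fun hh => h hh.symm]
      ring
  · intro i _ hi
    rw [eblk_apply_ne (Ne.symm hi)]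
    ring
  · intro h; exact absurd (Finset.mem_univ _) h

lemma norm_sq_block {i : Fin m} (u : EuclideanSpace ℝ (Fin (n i))) :
    ‖u‖ ^ 2 = ∑ a, u a ^ 2 := by
  rw [EuclideanSpace.norm_eq, Real.sq_sqrt (by positivity)]
  simp [sq_abs]

lemma eblk_dot_self (i : Fin m) (u : EuclideanSpace ℝ (Fin (n i))) :
    eblk (n := n) i u ⬝ᵥ eblk i u = ‖u‖ ^ 2 := by
  rw [norm_sq_block]
  simp only [dotProduct]
  rw [← Finset.univ_sigma_univ, Finset.sum_sigma]
  rw [Finset.sum_eq_single i]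
  · exact Finset.sum_congr rfl fun a _ => by rw [eblk_apply_eq]; ring
  · intro j _ hj
    refine Finset.sum_eq_zero fun a _ => ?_
    rw [eblk_apply_ne (p := ⟨j, a⟩) hj]
    ring
  · intro h; exact absurd (Finset.mem_univ _) h

lemma dot_self_sum (x y : JVec m n) :
    (flat y - flat x) ⬝ᵥ (flat y - flat x) = ∑ i, ‖y i - x i‖ ^ 2 := by
  simp only [dotProduct]
  rw [← Finset.univ_sigma_univ, Finset.sum_sigma]
  refine Finset.sum_congr rfl fun j _ => ?_
  rw [norm_sq_block]
  refine Finset.sum_congr rfl fun a _ => ?_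
  simp [flat]
  ring

end aux3

section eig
variable {ι : Type*} [Fintype ι] [DecidableEq ι] [Nonempty ι]
variable {A : Matrix ι ι ℝ}

lemma eigenvalue_le_maxEig (hA : A.IsHermitian) (i : ι) :
    hA.eigenvalues i ≤ maxEig hA :=
  le_ciSup (Set.finite_range _).bddAbove i

lemma ofReal_comp_eigenvalues (hA : A.IsHermitian) :
    (RCLike.ofReal ∘ hA.eigenvalues : ι → ℝ) = hA.eigenvalues := by
  funext i; simp [RCLike.ofReal]

lemma star_eq_transpose (U : Matrix ι ι ℝ) : star U = Uᵀ := by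
  ext i j
  simp [Matrix.star_apply]

lemma rayleigh_le (hA : A.IsHermitian) (v : ι → ℝ) :
    v ⬝ᵥ A *ᵥ v ≤ maxEig hA * (v ⬝ᵥ v) := by
  classical
  set U : Matrix ι ι ℝ := (hA.eigenvectorUnitary : Matrix ι ι ℝ) with hU
  set w : ι → ℝ := Uᵀ *ᵥ v with hw
  have hvU : ∀ y : ι → ℝ, v ⬝ᵥ U *ᵥ y = w ⬝ᵥ y := fun y => by
    rw [Matrix.dotProduct_mulVec]
    congr 1
    rw [hw, ← Matrix.vecMul_transpose]
    simp
  have hAv : A *ᵥ v = U *ᵥ (Matrix.diagonal hA.eigenvalues *ᵥ w) := by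
    conv_lhs => rw [hA.spectral_theorem]
    rw [Unitary.conjStarAlgAut_apply]
    rw [Matrix.mulVec_mulVec, Matrix.mulVec_mulVec]
    rw [ofReal_comp_eigenvalues hA, star_eq_transpose]
  have hUUt : U * Uᵀ = 1 := by
    rw [← star_eq_transpose U]
    exact Matrix.mem_unitaryGroup_iff.mp (hA.eigenvectorUnitary).2
  have hww : w ⬝ᵥ w = v ⬝ᵥ v := by
    rw [← hvU w, hw, Matrix.mulVec_mulVec, hUUt, Matrix.one_mulVec]
  calc v ⬝ᵥ A *ᵥ v = w ⬝ᵥ (Matrix.diagonal hA.eigenvalues *ᵥ w) := by rw [hAv, hvU]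
    _ = ∑ i, hA.eigenvalues i * (w i) ^ 2 := by
        simp only [dotProduct, Matrix.mulVec_diagonal]
        exact Finset.sum_congr rfl fun i _ => by ring
    _ ≤ ∑ i, maxEig hA * (w i) ^ 2 :=
        Finset.sum_le_sum fun i _ =>
          mul_le_mul_of_nonneg_right (eigenvalue_le_maxEig hA i) (sq_nonneg _)
    _ = maxEig hA * (w ⬝ᵥ w) := by
        rw [dotProduct, Finset.mul_sum]
        exact Finset.sum_congr rfl fun i _ => by ring
    _ = maxEig hA * (v ⬝ᵥ v) := by rw [hww]

lemma maxEig_nonneg_of_diag_zero (hA : A.IsHermitian) (hdiag : ∀ p, A p p = 0) :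
    0 ≤ maxEig hA := by
  classical
  have htr : ∑ i, hA.eigenvalues i = 0 := by
    have h1 : A.trace = 0 := by
      simp [Matrix.trace, Matrix.diag, hdiag]
    have h2 : A.trace = ∑ i, hA.eigenvalues i := by
      conv_lhs => rw [hA.spectral_theorem]
      rw [Unitary.conjStarAlgAut_apply]
      rw [Matrix.trace_mul_cycle]
      have : (star (hA.eigenvectorUnitary : Matrix ι ι ℝ)) *
          (hA.eigenvectorUnitary : Matrix ι ι ℝ) = 1 :=
        Matrix.mem_unitaryGroup_iff'.mp (hA.eigenvectorUnitary).2
      rw [this, Matrix.one_mul, ofReal_comp_eigenvalues hA, Matrix.trace_diagonal]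
    rw [h2] at h1; exact h1
  by_contra hneg
  push_neg at hneg
  have hall : ∀ i, hA.eigenvalues i < 0 := fun i =>
    lt_of_le_of_lt (eigenvalue_le_maxEig hA i) hneg
  have : ∑ i, hA.eigenvalues i < 0 :=
    Finset.sum_neg (fun i _ => hall i) Finset.univ_nonempty
  rw [htr] at this; exact lt_irrefl _ this

end eig

section main
variable {m : ℕ} {n : Fin m → ℕ}

lemma smul_dot_smul (Q : Matrix (JIdx m n) (JIdx m n) ℝ) (t : ℝ) (e : JIdx m n → ℝ) :
    (t • e) ⬝ᵥ Q *ᵥ (t • e) = t ^ 2 * (e ⬝ᵥ Q *ᵥ e) := by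
  rw [Matrix.mulVec_smul, dotProduct_smul, smul_dotProduct]
  simp [smul_eq_mul]; ring

lemma half_combo {i : Fin m} (a b : EuclideanSpace ℝ (Fin (n i))) :
    a + (2⁻¹ : ℝ) • (b - a) = (2⁻¹ : ℝ) • a + (2⁻¹ : ℝ) • b := by
  module

lemma descent_step [Nonempty (JIdx m n)]
    (X : ∀ i : Fin m, Set (EuclideanSpace ℝ (Fin (n i))))
    (hXcvx : ∀ i, Convex ℝ (X i))
    (Q : Matrix (JIdx m n) (JIdx m n) ℝ) (hQ : Q.PosSemidef) (q : JIdx m n → ℝ)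
    (hQz : (Q - blockDiagPart Q).IsHermitian) (c : ℝ)
    (a b : JVec m n) (ha : ∀ i, a i ∈ X i) (hb : ∀ i, b i ∈ X i)
    (hineq : ∀ i : Fin m, ∀ z ∈ X i,
      quadF Q q (upd a i (b i)) + c * ‖b i - a i‖ ^ 2 ≤
        quadF Q q (upd a i z) + c * ‖z - a i‖ ^ 2) :
    quadF Q q b + (3/2 * c - maxEig hQz) * (∑ i, ‖b i - a i‖ ^ 2) ≤ quadF Q q a := by
  classical
  have hQh := hQ.1
  set d : JIdx m n → ℝ := flat b - flat a with hd
  set S : ℝ := ∑ i, ‖b i - a i‖ ^ 2 with hS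
  -- per-agent inequality
  have key : ∀ i : Fin m, gQ Q q (flat a) (eblk i (b i - a i)) ≤
      -(3/2) * (eblk i (b i - a i) ⬝ᵥ Q *ᵥ eblk i (b i - a i))
        - 3/2 * c * ‖b i - a i‖ ^ 2 := by
    intro i
    have hz : a i + (2⁻¹ : ℝ) • (b i - a i) ∈ X i := by
      rw [half_combo]
      exact hXcvx i (ha i) (hb i) (by norm_num) (by norm_num) (by norm_num)
    have H := hineq i _ hz
    rw [quadF_upd Q q hQh, quadF_upd Q q hQh] at H
    have hsub : a i + (2⁻¹ : ℝ) • (b i - a i) - a i = (2⁻¹ : ℝ) • (b i - a i) := by abel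
    rw [hsub, eblk_smul, gQ_smul, smul_dot_smul, norm_smul] at H
    simp only [norm_inv, Real.norm_ofNat, mul_pow] at H
    norm_num at H
    linarith
  have hsum : ∑ i, gQ Q q (flat a) (eblk i (b i - a i)) ≤
      -(3/2) * (∑ i, eblk i (b i - a i) ⬝ᵥ Q *ᵥ eblk i (b i - a i)) - 3/2 * c * S := by
    calc ∑ i, gQ Q q (flat a) (eblk i (b i - a i))
        ≤ ∑ i : Fin m, (-(3/2) * (eblk i (b i - a i) ⬝ᵥ Q *ᵥ eblk i (b i - a i))
            - 3/2 * c * ‖b i - a i‖ ^ 2) := Finset.sum_le_sum fun i _ => key i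
      _ = _ := by rw [Finset.sum_sub_distrib, ← Finset.mul_sum, ← Finset.mul_sum]
  have hGsum : ∑ i, gQ Q q (flat a) (eblk i (b i - a i)) = gQ Q q (flat a) d := by
    rw [gQ_sum, sum_eblk]
  have hHsum : ∑ i, eblk i (b i - a i) ⬝ᵥ Q *ᵥ eblk i (b i - a i)
      = d ⬝ᵥ blockDiagPart Q *ᵥ d := sum_quad_blocks Q a b
  have hSs : d ⬝ᵥ d = S := dot_self_sum a b
  have hdiff : quadF Q q b = quadF Q q a + gQ Q q (flat a) d + d ⬝ᵥ Q *ᵥ d :=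
    quadF_diff Q q hQh a b
  have hray : d ⬝ᵥ (Q - blockDiagPart Q) *ᵥ d ≤ maxEig hQz * S := by
    rw [← hSs]; exact rayleigh_le hQz d
  have hsplit : d ⬝ᵥ (Q - blockDiagPart Q) *ᵥ d
      = d ⬝ᵥ Q *ᵥ d - d ⬝ᵥ blockDiagPart Q *ᵥ d := by
    rw [Matrix.sub_mulVec, dotProduct_sub]
  have hpsd : 0 ≤ d ⬝ᵥ blockDiagPart Q *ᵥ d := by
    rw [← hHsum]
    refine Finset.sum_nonneg fun i _ => ?_
    have := hQ.dotProduct_mulVec_nonneg (eblk i (b i - a i))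
    simpa using this
  rw [hGsum] at hsum
  nlinarith [hsum, hray, hsplit, hpsd, hdiff]

lemma fixedpoint_min
    (X : ∀ i : Fin m, Set (EuclideanSpace ℝ (Fin (n i))))
    (hXcvx : ∀ i, Convex ℝ (X i))
    (Q : Matrix (JIdx m n) (JIdx m n) ℝ) (hQ : Q.PosSemidef) (q : JIdx m n → ℝ)
    (c : ℝ) (xb : JVec m n) (hxb : ∀ i, xb i ∈ X i)
    (H : ∀ i : Fin m, ∀ z ∈ X i,
      quadF Q q xb ≤ quadF Q q (upd xb i z) + c * ‖z - xb i‖ ^ 2)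
    (w : JVec m n) (hw : ∀ i, w i ∈ X i) :
    quadF Q q xb ≤ quadF Q q w := by
  classical
  have hQh := hQ.1
  set d : JIdx m n → ℝ := flat w - flat xb with hd
  -- first-order optimality per agent
  have key : ∀ i : Fin m, 0 ≤ gQ Q q (flat xb) (eblk i (w i - xb i)) := by
    intro i
    set C : ℝ := eblk i (w i - xb i) ⬝ᵥ Q *ᵥ eblk i (w i - xb i) + c * ‖w i - xb i‖ ^ 2 with hC
    have step : ∀ t ∈ Set.Ioc (0:ℝ) 1,
        0 ≤ gQ Q q (flat xb) (eblk i (w i - xb i)) + t * C := by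
      rintro t ⟨ht0, ht1⟩
      have hz : xb i + t • (w i - xb i) ∈ X i := by
        have : (1 - t) • xb i + t • w i ∈ X i :=
          hXcvx i (hxb i) (hw i) (by linarith) (le_of_lt ht0) (by ring)
        have he : xb i + t • (w i - xb i) = (1 - t) • xb i + t • w i := by module
        rw [he]; exact this
      have Hi := H i _ hz
      rw [quadF_upd Q q hQh] at Hi
      have hsub : xb i + t • (w i - xb i) - xb i = t • (w i - xb i) := by abel
      rw [hsub, eblk_smul, gQ_smul, smul_dot_smul, norm_smul] at Hi
      have habs : ‖t‖ ^ 2 = t ^ 2 := by rw [Real.norm_eq_abs, sq_abs]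
      rw [mul_pow, habs] at Hi
      have h2 : 0 ≤ t * (gQ Q q (flat xb) (eblk i (w i - xb i)) + t * C) := by
        rw [hC]; ring_nf; ring_nf at Hi; nlinarith [Hi]
      exact nonneg_of_mul_nonneg_right h2 ht0
    -- let t → 0⁺
    have htend : Filter.Tendsto (fun t : ℝ => gQ Q q (flat xb) (eblk i (w i - xb i)) + t * C)
        (nhdsWithin 0 (Set.Ioi 0)) (nhds (gQ Q q (flat xb) (eblk i (w i - xb i)))) := by
      have : Filter.Tendsto (fun t : ℝ => gQ Q q (flat xb) (eblk i (w i - xb i)) + t * C)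
          (nhds 0) (nhds (gQ Q q (flat xb) (eblk i (w i - xb i)) + 0 * C)) := by
        exact (continuous_const.add (continuous_id.mul continuous_const)).tendsto 0
      simpa using this.mono_left nhdsWithin_le_nhds
    refine ge_of_tendsto htend ?_
    filter_upwards [Ioc_mem_nhdsGT_of_mem (Set.left_mem_Ico.mpr one_pos)] with t ht
    exact step t ht
  have hGsum : 0 ≤ gQ Q q (flat xb) d := by
    rw [hd, ← sum_eblk xb w, ← gQ_sum]
    exact Finset.sum_nonneg fun i _ => key i
  have hpsd : 0 ≤ d ⬝ᵥ Q *ᵥ d := by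
    have := hQ.dotProduct_mulVec_nonneg d; simpa using this
  have hdiff : quadF Q q w = quadF Q q xb + gQ Q q (flat xb) d + d ⬝ᵥ Q *ᵥ d :=
    quadF_diff Q q hQh xb w
  linarith

def flatL : JVec m n →ₗ[ℝ] (JIdx m n → ℝ) where
  toFun := flat
  map_add' x y := funext fun p => rfl
  map_smul' t x := funext fun p => rfl

lemma contFlat : Continuous (flat : JVec m n → (JIdx m n → ℝ)) :=
  (flatL (m := m) (n := n)).continuous_of_finiteDimensional

def evalB (i : Fin m) : JVec m n →ₗ[ℝ] EuclideanSpace ℝ (Fin (n i)) where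
  toFun x := x i
  map_add' x y := rfl
  map_smul' t x := rfl

lemma contEval (i : Fin m) : Continuous (fun x : JVec m n => x i) :=
  (evalB (m := m) (n := n) i).continuous_of_finiteDimensional

lemma upd_apply_self (y : JVec m n) (i : Fin m) (z : EuclideanSpace ℝ (Fin (n i))) :
    upd y i z i = z := by
  unfold upd; exact Function.update_self i z y.ofLp

lemma upd_apply_ne (y : JVec m n) {i j : Fin m} (z : EuclideanSpace ℝ (Fin (n i)))
    (h : j ≠ i) : upd y i z j = y j := by
  unfold upd; exact Function.update_of_ne h z y.ofLp

def embJ (i : Fin m) : EuclideanSpace ℝ (Fin (n i)) →ₗ[ℝ] JVec m n where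
  toFun u := upd 0 i u
  map_add' u v := by
    refine PiLp.ext fun j => ?_
    show upd 0 i (u + v) j = (upd 0 i u + upd 0 i v) j
    rw [PiLp.add_apply]
    by_cases h : j = i
    · subst h; rw [upd_apply_self, upd_apply_self, upd_apply_self]
    · rw [upd_apply_ne _ _ h, upd_apply_ne _ _ h, upd_apply_ne _ _ h, PiLp.zero_apply, add_zero]
  map_smul' t u := by
    refine PiLp.ext fun j => ?_
    show upd 0 i (t • u) j = (t • upd 0 i u) j
    rw [PiLp.smul_apply]
    by_cases h : j = i
    · subst h; rw [upd_apply_self, upd_apply_self]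
    · rw [upd_apply_ne _ _ h, upd_apply_ne _ _ h, PiLp.zero_apply, smul_zero]

lemma contEmb (i : Fin m) : Continuous (embJ (m := m) (n := n) i) :=
  (embJ (m := m) (n := n) i).continuous_of_finiteDimensional

lemma upd_eq_add (y : JVec m n) (i : Fin m) (z : EuclideanSpace ℝ (Fin (n i))) :
    upd y i z = y + embJ i (z - y i) := by
  refine PiLp.ext fun j => ?_
  rw [PiLp.add_apply]
  show upd y i z j = y j + upd (0 : JVec m n) i (z - y i) j
  by_cases h : j = i
  · subst h; rw [upd_apply_self, upd_apply_self]; abel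
  · rw [upd_apply_ne _ _ h, upd_apply_ne _ _ h, PiLp.zero_apply, add_zero]

lemma contQuadF (Q : Matrix (JIdx m n) (JIdx m n) ℝ) (q : JIdx m n → ℝ) :
    Continuous (quadF Q q) := by
  have h1 : Continuous (fun v : JIdx m n → ℝ => v ⬝ᵥ Q *ᵥ v + q ⬝ᵥ v) := by
    simp only [dotProduct, Matrix.mulVec]
    refine Continuous.add ?_ ?_
    · exact continuous_finset_sum _ fun p _ => (continuous_apply p).mul
        (continuous_finset_sum _ fun r _ => continuous_const.mul (continuous_apply r))
    · exact continuous_finset_sum _ fun p _ => continuous_const.mul (continuous_apply p)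
  exact h1.comp contFlat

lemma compactK (X : ∀ i : Fin m, Set (EuclideanSpace ℝ (Fin (n i))))
    (hXcpt : ∀ i, IsCompact (X i)) :
    IsCompact {y : JVec m n | ∀ i, y i ∈ X i} := by
  have h : {y : JVec m n | ∀ i, y i ∈ X i}
      = (PiLp.continuousLinearEquiv 2 ℝ (fun i : Fin m => EuclideanSpace ℝ (Fin (n i)))).symm ''
        (Set.univ.pi X) := by
    ext y
    constructor
    · intro hy
      exact ⟨fun i => y i, fun i _ => hy i, rfl⟩
    · rintro ⟨v, hv, rfl⟩ i
      exact hv i (Set.mem_univ i)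
  rw [h]
  exact (isCompact_univ_pi hXcpt).image
    (PiLp.continuousLinearEquiv 2 ℝ _).symm.continuous

lemma maxEig_eq_zero_of_zero {ι : Type*} [Fintype ι] [DecidableEq ι] [Nonempty ι]
    {A : Matrix ι ι ℝ} (hA : A.IsHermitian) (h0 : A = 0) : maxEig hA = 0 := by
  have h1 : ∀ i, hA.eigenvalues i = 0 := by
    intro i
    rw [Matrix.IsHermitian.eigenvalues_eq]
    subst h0
    simp
  unfold maxEig
  simp only [h1]
  exact ciSup_const

end main


/-- Theorem 3: for the quadratic objective, if `c > ((m−1)/(2m−1))·2λ_max(Q_z)`, the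
regularized Jacobi iterates satisfy `dist(x_k, X*) → 0`, where `X*` is the (nonempty)
set of minimizers of `f` over `X`. -/
theorem stmt_13 {m : ℕ} {n : Fin m → ℕ} (hm : 0 < m) [Nonempty (JIdx m n)]
    (X : ∀ i : Fin m, Set (EuclideanSpace ℝ (Fin (n i))))
    (hXne : ∀ i, (X i).Nonempty)
    (hXcpt : ∀ i, IsCompact (X i))
    (hXcvx : ∀ i, Convex ℝ (X i))
    (Q : Matrix (JIdx m n) (JIdx m n) ℝ) (hQ : Q.PosSemidef)
    (q : JIdx m n → ℝ)
    (hQz : (Q - blockDiagPart Q).IsHermitian)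
    (c : ℝ) (hc : ((m : ℝ) - 1) / (2 * m - 1) * (2 * maxEig hQz) < c)
    (x : ℕ → JVec m n) (hx0 : ∀ i, x 0 i ∈ X i)
    (hrec : ∀ k : ℕ, ∀ i : Fin m, x (k + 1) i ∈ X i ∧
      ∀ z ∈ X i,
        quadF Q q (upd (x k) i (x (k + 1) i)) + c * ‖x (k + 1) i - x k i‖ ^ 2 ≤
          quadF Q q (upd (x k) i z) + c * ‖z - x k i‖ ^ 2) :
    ({y : JVec m n | (∀ i, y i ∈ X i) ∧
        ∀ w : JVec m n, (∀ i, w i ∈ X i) → quadF Q q y ≤ quadF Q q w}).Nonempty ∧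
      Tendsto (fun k : ℕ => Metric.infDist (x k)
        {y : JVec m n | (∀ i, y i ∈ X i) ∧
          ∀ w : JVec m n, (∀ i, w i ∈ X i) → quadF Q q y ≤ quadF Q q w}) atTop (𝓝 0) := by
  classical
  set Xstar : Set (JVec m n) := {y : JVec m n | (∀ i, y i ∈ X i) ∧
      ∀ w : JVec m n, (∀ i, w i ∈ X i) → quadF Q q y ≤ quadF Q q w} with hXstar
  set K : Set (JVec m n) := {y : JVec m n | ∀ i, y i ∈ X i} with hKdef
  have hKcpt : IsCompact K := compactK X hXcpt
  have hKne : K.Nonempty := by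
    choose y hy using hXne
    exact ⟨WithLp.toLp 2 y, hy⟩
  have hcont : Continuous (quadF Q q) := contQuadF Q q
  obtain ⟨xstar, hxstarK, hxstarmin⟩ := hKcpt.exists_isMinOn hKne hcont.continuousOn
  have hXstar_ne : Xstar.Nonempty :=
    ⟨xstar, hxstarK, fun w hw => (isMinOn_iff.mp hxstarmin) w hw⟩
  refine ⟨hXstar_ne, ?_⟩
  -- iterates stay feasible
  have hmem : ∀ k i, x k i ∈ X i := by
    intro k
    induction k with
    | zero => exact hx0
    | succ k _ => exact fun i => (hrec k i).1
  have hKmem : ∀ k, x k ∈ K := fun k i => hmem k i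
  -- eigenvalue bound
  have hμ0 : 0 ≤ maxEig hQz := by
    apply maxEig_nonneg_of_diag_zero
    intro p
    simp [blockDiagPart, Matrix.sub_apply]
  set ε : ℝ := 3/2 * c - maxEig hQz with hεdef
  have hε : 0 < ε := by
    by_cases hm1 : m = 1
    · have hA0 : Q - blockDiagPart Q = 0 := by
        ext p r
        have hpr : p.1 = r.1 := by
          subst hm1
          exact Subsingleton.elim _ _
        simp [blockDiagPart, Matrix.sub_apply, hpr]
      have h0 : maxEig hQz = 0 := maxEig_eq_zero_of_zero hQz hA0
      rw [h0] at hc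
      simp at hc
      rw [hεdef, h0]
      linarith
    · have hm2 : (2:ℝ) ≤ (m:ℝ) := by
        have : 2 ≤ m := by omega
        exact_mod_cast this
      have hden : (0:ℝ) < 2 * (m:ℝ) - 1 := by linarith
      rw [div_mul_eq_mul_div, div_lt_iff₀ hden] at hc
      have hkey : ((m:ℝ) - 2) * maxEig hQz ≥ 0 :=
        mul_nonneg (by linarith) hμ0
      rw [hεdef]
      nlinarith [hc, hμ0, hm2, hkey]
  -- descent
  set F : ℕ → ℝ := fun k => quadF Q q (x k) with hF
  set S : ℕ → ℝ := fun k => ∑ i, ‖x (k+1) i - x k i‖ ^ 2 with hS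
  have hdes : ∀ k, F (k+1) + ε * S k ≤ F k := fun k =>
    descent_step X hXcvx Q hQ q hQz c (x k) (x (k+1)) (hmem k) (hmem (k+1))
      (fun i z hz => (hrec k i).2 z hz)
  have hSnn : ∀ k, 0 ≤ S k := fun k => Finset.sum_nonneg fun i _ => sq_nonneg _
  have hFanti : Antitone F := antitone_nat_of_succ_le fun k => by
    have := hdes k
    have h2 := mul_nonneg hε.le (hSnn k)
    linarith
  have hFbdd : BddBelow (Set.range F) := by
    refine ⟨quadF Q q xstar, ?_⟩
    rintro _ ⟨k, rfl⟩
    exact (isMinOn_iff.mp hxstarmin) (x k) (hKmem k)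
  have hFconv : Tendsto F atTop (𝓝 (⨅ k, F k)) := tendsto_atTop_ciInf hFanti hFbdd
  have hFconv1 : Tendsto (fun k => F (k+1)) atTop (𝓝 (⨅ k, F k)) :=
    hFconv.comp (tendsto_add_atTop_nat 1)
  have hdiffF : Tendsto (fun k => F k - F (k+1)) atTop (𝓝 0) := by
    have := hFconv.sub hFconv1
    simpa using this
  have hS0 : Tendsto S atTop (𝓝 0) := by
    have hle : ∀ k, S k ≤ ε⁻¹ * (F k - F (k+1)) := fun k => by
      rw [le_inv_mul_iff₀ hε]
      linarith [hdes k]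
    have h2 : Tendsto (fun k => ε⁻¹ * (F k - F (k+1))) atTop (𝓝 0) := by
      have := hdiffF.const_mul ε⁻¹
      simpa using this
    exact squeeze_zero hSnn hle h2
  -- block differences tend to zero
  have hnsq : ∀ i, Tendsto (fun k => ‖x (k+1) i - x k i‖ ^ 2) atTop (𝓝 0) := by
    intro i
    refine squeeze_zero (fun k => sq_nonneg _) (fun k => ?_) hS0
    exact Finset.single_le_sum (f := fun j => ‖x (k+1) j - x k j‖ ^ 2)
      (fun j _ => sq_nonneg _) (Finset.mem_univ i)
  have hblk : ∀ i, Tendsto (fun k => x (k+1) i - x k i) atTop (𝓝 0) := by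
    intro i
    rw [tendsto_zero_iff_norm_tendsto_zero]
    have h1 := (Real.continuous_sqrt.tendsto 0).comp (hnsq i)
    have h2 : (fun k => Real.sqrt (‖x (k+1) i - x k i‖ ^ 2)) = fun k => ‖x (k+1) i - x k i‖ := by
      funext k
      exact Real.sqrt_sq (norm_nonneg _)
    rw [Function.comp_def, h2] at h1
    simpa using h1
  -- convergence via subsequences
  apply Filter.tendsto_of_subseq_tendsto
  intro ns hns
  obtain ⟨xb, hxbK, φ, hφ, hconv⟩ := hKcpt.tendsto_subseq (fun j => hKmem (ns j))
  refine ⟨φ, ?_⟩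
  set ks : ℕ → ℕ := fun j => ns (φ j) with hks
  have hconv' : Tendsto (fun j => x (ks j)) atTop (𝓝 xb) := hconv
  have hksto : Tendsto ks atTop atTop := hns.comp hφ.tendsto_atTop
  have hblkconv : ∀ i, Tendsto (fun j => x (ks j) i) atTop (𝓝 (xb i)) := fun i =>
    ((contEval i).tendsto xb).comp hconv'
  have hxb_star : xb ∈ Xstar := by
    refine ⟨hxbK, ?_⟩
    refine fixedpoint_min X hXcvx Q hQ q c xb hxbK ?_
    intro i z hz
    have hdiffj : Tendsto (fun j => x (ks j + 1) i - x (ks j) i) atTop (𝓝 0) :=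
      (hblk i).comp hksto
    have hnext : Tendsto (fun j => x (ks j + 1) i) atTop (𝓝 (xb i)) := by
      have := (hblkconv i).add hdiffj
      simpa using this
    have hupd : Tendsto (fun j => upd (x (ks j)) i (x (ks j + 1) i)) atTop (𝓝 xb) := by
      have h1 : Tendsto (fun j => embJ (m := m) (n := n) i (x (ks j + 1) i - x (ks j) i))
          atTop (𝓝 (embJ i 0)) := ((contEmb i).tendsto 0).comp hdiffj
      have h2 := hconv'.add h1
      rw [map_zero, add_zero] at h2
      have h3 : (fun j => x (ks j) + embJ i (x (ks j + 1) i - x (ks j) i))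
          = fun j => upd (x (ks j)) i (x (ks j + 1) i) := by
        funext j
        rw [← upd_eq_add]
      rwa [h3] at h2
    have hLHS : Tendsto (fun j => quadF Q q (upd (x (ks j)) i (x (ks j + 1) i))
        + c * ‖x (ks j + 1) i - x (ks j) i‖ ^ 2) atTop (𝓝 (quadF Q q xb)) := by
      have h1 := (hcont.tendsto xb).comp hupd
      have h2 : Tendsto (fun j => c * ‖x (ks j + 1) i - x (ks j) i‖ ^ 2) atTop (𝓝 0) := by
        have := ((hnsq i).comp hksto).const_mul c
        simpa using this
      have := h1.add h2
      simpa using this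
    have hRHS : Tendsto (fun j => quadF Q q (upd (x (ks j)) i z) + c * ‖z - x (ks j) i‖ ^ 2)
        atTop (𝓝 (quadF Q q (upd xb i z) + c * ‖z - xb i‖ ^ 2)) := by
      have hupdz : Tendsto (fun j => upd (x (ks j)) i z) atTop (𝓝 (upd xb i z)) := by
        have h1 : Tendsto (fun j => embJ (m := m) (n := n) i (z - x (ks j) i))
            atTop (𝓝 (embJ i (z - xb i))) :=
          ((contEmb i).tendsto _).comp (tendsto_const_nhds.sub (hblkconv i))
        have h2 := hconv'.add h1
        have h3 : (fun j => x (ks j) + embJ i (z - x (ks j) i))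
            = fun j => upd (x (ks j)) i z := by
          funext j
          rw [← upd_eq_add]
        rw [h3] at h2
        rwa [← upd_eq_add] at h2
      have h1 := (hcont.tendsto _).comp hupdz
      have h2 : Tendsto (fun j => c * ‖z - x (ks j) i‖ ^ 2) atTop
          (𝓝 (c * ‖z - xb i‖ ^ 2)) := by
        have hn : Tendsto (fun j => z - x (ks j) i) atTop (𝓝 (z - xb i)) :=
          tendsto_const_nhds.sub (hblkconv i)
        exact (((hn.norm).pow 2).const_mul c)
      exact h1.add h2
    exact le_of_tendsto_of_tendsto' hLHS hRHS (fun j => (hrec (ks j) i).2 z hz)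
  have hfin : Tendsto (fun j => Metric.infDist (x (ks j)) Xstar) atTop
      (𝓝 (Metric.infDist xb Xstar)) :=
    ((Metric.continuous_infDist_pt Xstar).tendsto xb).comp hconv'
  rw [Metric.infDist_zero_of_mem hxb_star] at hfin
  exact hfin
end
end

section
/- If c > ((m−1)/(2m−1)) · √m · L, then the sequence (x_k) generated by the regularized Jacobi iteration satisfies Σ_{k=1}^∞ ‖x_{k+1} − x_k‖² < ∞, and in particular ‖x_{k+1} − x_k‖ → 0 as k → ∞. -/
open Matrix Filter Topology
open scoped RealInnerProductSpace

noncomputable section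

open InnerProductSpace Set in

private lemma slope_le_deriv_aux {φ : ℝ → ℝ} {a C : ℝ} (h : HasDerivAt φ a 0)
    (hs : ∀ t ∈ Set.Ioc (0:ℝ) 1, φ t - φ 0 ≤ t * C) : a ≤ C := by
  have h1 : Tendsto (slope φ 0) (𝓝[>] 0) (𝓝 a) :=
    (hasDerivAt_iff_tendsto_slope.1 h).mono_left
      (nhdsWithin_mono 0 (fun t ht => ne_of_gt ht))
  refine le_of_tendsto h1 ?_
  filter_upwards [Ioc_mem_nhdsGT zero_lt_one] with t ht
  rw [slope_def_field, div_le_iff₀ (by simpa using ht.1)]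
  have := hs t ht
  simp only [sub_zero]
  linarith

private lemma le_deriv_slope_aux {φ : ℝ → ℝ} {a C : ℝ} (h : HasDerivAt φ a 0)
    (hs : ∀ t ∈ Set.Ioc (0:ℝ) 1, t * C ≤ φ t - φ 0) : C ≤ a := by
  have h1 : Tendsto (slope φ 0) (𝓝[>] 0) (𝓝 a) :=
    (hasDerivAt_iff_tendsto_slope.1 h).mono_left
      (nhdsWithin_mono 0 (fun t ht => ne_of_gt ht))
  refine ge_of_tendsto h1 ?_
  filter_upwards [Ioc_mem_nhdsGT zero_lt_one] with t ht
  rw [slope_def_field, le_div_iff₀ (by simpa using ht.1)]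
  have := hs t ht
  simp only [sub_zero]
  linarith

private lemma hasDerivAt_line {E : Type*} [NormedAddCommGroup E] [InnerProductSpace ℝ E]
    [CompleteSpace E] {f : E → ℝ} (hf : Differentiable ℝ f) (y w : E) :
    HasDerivAt (fun t : ℝ => f (y + t • w)) ⟪gradient f y, w⟫ 0 := by
  have hline : HasDerivAt (fun t : ℝ => y + t • w) w 0 := by
    simpa using ((hasDerivAt_id (0:ℝ)).smul_const w).const_add y
  have h0 : y + (0:ℝ) • w = y := by simp
  have hfd : HasFDerivAt f (fderiv ℝ f ((fun t : ℝ => y + t • w) 0)) ((fun t : ℝ => y + t • w) 0) := by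
    simpa [h0] using (hf y).hasFDerivAt
  have h2 := hfd.comp_hasDerivAt 0 hline
  have h3 : fderiv ℝ f y w = ⟪gradient f y, w⟫ := by
    rw [gradient, ← InnerProductSpace.toDual_apply_apply]
    simp
  have h4 : (fderiv ℝ f ((fun t : ℝ => y + t • w) 0)) w = ⟪gradient f y, w⟫ := by
    simp only [zero_smul, add_zero]; exact h3
  rw [h4] at h2
  exact h2

private lemma grad_convex_ineq {E : Type*} [NormedAddCommGroup E] [InnerProductSpace ℝ E]
    [CompleteSpace E] {f : E → ℝ} (hf : Differentiable ℝ f) (hfc : ConvexOn ℝ Set.univ f)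
    (a b : E) : ⟪gradient f a, b - a⟫ ≤ f b - f a := by
  refine slope_le_deriv_aux (hasDerivAt_line hf a (b - a)) ?_
  intro t ht
  have h1 : a + t • (b - a) = (1 - t) • a + t • b := by module
  have h2 := hfc.2 (Set.mem_univ a) (Set.mem_univ b) (by linarith [ht.2] : (0:ℝ) ≤ 1 - t)
    ht.1.le (by ring)
  have e0 : a + (0:ℝ) • (b - a) = a := by simp
  simp only [h1, e0, smul_eq_mul] at h2 ⊢
  linarith

private lemma block_norm_le {m : ℕ} {n : Fin m → ℕ}
    (y : PiLp 2 (fun i : Fin m => EuclideanSpace ℝ (Fin (n i)))) (i : Fin m) : ‖y i‖ ≤ ‖y‖ := by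
  have h1 : ‖y i‖^2 ≤ ‖y‖^2 := by
    conv_rhs => rw [PiLp.norm_sq_eq_of_L2]
    exact Finset.single_le_sum (f := fun j => ‖y j‖^2) (fun j _ => sq_nonneg _) (Finset.mem_univ i)
  nlinarith [norm_nonneg (y i), norm_nonneg y]

set_option maxHeartbeats 1000000 in
private lemma jacobi_descent {m : ℕ} {n : Fin m → ℕ} (hm : 0 < m)
    (X : ∀ i : Fin m, Set (EuclideanSpace ℝ (Fin (n i))))
    (hXcvx : ∀ i, Convex ℝ (X i))
    (f : JVec m n → ℝ) (hdf : Differentiable ℝ f) (hfc : ConvexOn ℝ Set.univ f)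
    (L c : ℝ) (hL : 0 ≤ L)
    (hLip : ∀ a b : JVec m n, (∀ i, a i ∈ X i) → (∀ i, b i ∈ X i) →
      ‖gradient f a - gradient f b‖ ≤ L * ‖a - b‖)
    (p q : JVec m n) (hp : ∀ i, p i ∈ X i) (hq : ∀ i, q i ∈ X i)
    (hopt : ∀ i : Fin m, ∀ z ∈ X i,
        f (upd p i (q i)) + c * ‖q i - p i‖ ^ 2 ≤ f (upd p i z) + c * ‖z - p i‖ ^ 2) :
    f q + (((2*(m:ℝ)-1)*c - ((m:ℝ)-1)*(Real.sqrt m * L)) / m) * ‖q - p‖^2 ≤ f p := by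
  classical
  have hm1 : (1:ℝ) ≤ (m:ℝ) := by exact_mod_cast hm
  have hmpos : (0:ℝ) < m := by linarith
  set μ : ℝ := (m:ℝ)⁻¹ with hμ
  have hμpos : 0 < μ := inv_pos.2 hmpos
  have hμ1 : μ ≤ 1 := by
    rw [hμ]
    exact inv_le_one_of_one_le₀ hm1
  have hμm : (m:ℝ) * μ = 1 := mul_inv_cancel₀ (ne_of_gt hmpos)
  set D : JVec m n := q - p with hD
  have hDap : ∀ i, D i = q i - p i := fun i => rfl
  set u : Fin m → JVec m n := fun i => upd p i (q i) with hu
  have huq : ∀ i, u i i = q i := fun i => by rw [hu]; exact Function.update_self i (q i) p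
  have hunq : ∀ i j, j ≠ i → u i j = p j := fun i j h => by rw [hu]; exact Function.update_of_ne h (q i) p
  have humem : ∀ i j, u i j ∈ X j := by
    intro i j
    rcases eq_or_ne j i with h | h
    · subst h; rw [huq]; exact hq j
    · rw [hunq i j h]; exact hp j
  -- (i) block descent
  have hblock : ∀ i, f (u i) + c * ‖D i‖^2 ≤ f p := by
    intro i
    have h1 := hopt i (p i) (hp i)
    have h2 : upd p i (p i) = p := by simp [upd]
    rw [h2] at h1
    have h3 : ‖p i - p i‖ = 0 := by simp
    rw [h3] at h1
    rw [hDap i]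
    have : c * 0 ^ 2 = 0 := by ring
    rw [this, add_zero] at h1
    exact h1
  -- (ii) averaging identity
  have hid : (∑ i, μ • u i) = p + μ • D := by
    refine PiLp.ext fun j => ?_
    have h1 : (∑ i, μ • u i) j = ∑ i, μ • (u i j) := by
      rw [WithLp.ofLp_sum, Finset.sum_apply]; simp only [PiLp.smul_apply]
    have h2 : ∀ i ∈ Finset.univ.erase j, μ • (u i j) = μ • p j := by
      intro i hi
      rw [hunq i j (Finset.mem_erase.1 hi).1.symm]
    have hcast : ((m - 1 : ℕ) : ℝ) = (m:ℝ) - 1 := by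
      rw [Nat.cast_sub hm]; norm_num
    have hc1 : ((m:ℝ) - 1) * μ = 1 - μ := by
      rw [hμ, sub_mul, mul_inv_cancel₀ (ne_of_gt hmpos), one_mul]
    calc (∑ i, μ • u i) j = ∑ i, μ • (u i j) := h1
      _ = μ • (u j j) + ∑ i ∈ Finset.univ.erase j, μ • (u i j) :=
          (Finset.add_sum_erase _ _ (Finset.mem_univ j)).symm
      _ = μ • q j + ((m - 1 : ℕ) : ℝ) • (μ • p j) := by
          rw [Finset.sum_congr rfl h2, Finset.sum_const,
            Finset.card_erase_of_mem (Finset.mem_univ j), Finset.card_univ, Fintype.card_fin,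
            huq j, ← Nat.cast_smul_eq_nsmul ℝ]
      _ = p j + μ • (q j - p j) := by
          rw [hcast, smul_smul, hc1]
          module
      _ = (p + μ • D) j := rfl
  -- (iii) Jensen average bound
  have havg : f (p + μ • D) ≤ f p - c * μ * ‖D‖^2 := by
    have hsum1 : ∑ _i : Fin m, μ = 1 := by
      rw [Finset.sum_const, Finset.card_univ, Fintype.card_fin, nsmul_eq_mul]; exact hμm
    have hJ := hfc.map_sum_le (t := Finset.univ) (w := fun _ => μ) (p := u)
      (fun _ _ => hμpos.le) hsum1 (fun i _ => Set.mem_univ _)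
    rw [hid] at hJ
    simp only [smul_eq_mul] at hJ
    have h3 : ∑ i, μ * f (u i) ≤ ∑ i, μ * (f p - c * ‖D i‖^2) :=
      Finset.sum_le_sum (fun i _ => mul_le_mul_of_nonneg_left (by linarith [hblock i]) hμpos.le)
    have h4 : ∑ i, μ * (f p - c * ‖D i‖^2) = f p - c * μ * ‖D‖^2 := by
      conv_rhs => rw [PiLp.norm_sq_eq_of_L2]
      rw [← Finset.mul_sum, Finset.sum_sub_distrib, Finset.sum_const, Finset.card_univ,
        Fintype.card_fin, nsmul_eq_mul, ← Finset.mul_sum]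
      have hmm := hμm
      set S := ∑ i, ‖D i‖^2
      linear_combination (f p) * hμm
    linarith [hJ, h3, h4.le, h4.ge]
  -- (iv) first-order optimality condition
  have hFOC : ∀ i, ⟪(gradient f (u i)) i, D i⟫ ≤ -(2*c) * ‖D i‖^2 := by
    intro i
    set v : EuclideanSpace ℝ (Fin (n i)) := p i - q i with hv
    set w : JVec m n := upd (0 : JVec m n) i v with hw
    have hwi : w i = v := by rw [hw]; show Function.update (0 : JVec m n) i v i = v; exact Function.update_self _ _ _
    have hwn : ∀ j, j ≠ i → w j = 0 := fun j h => by
      rw [hw]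
      show Function.update (0 : JVec m n) i v j = 0
      rw [Function.update_of_ne h]
      rfl
    have hcurve : ∀ t : ℝ, upd p i (q i + t • v) = u i + t • w := by
      intro t; refine PiLp.ext fun j => ?_
      have hap : (u i + t • w) j = u i j + t • (w j) := rfl
      rcases eq_or_ne j i with h | h
      · subst h
        rw [hap, huq j, hwi]
        show Function.update p j (q j + t • v) j = q j + t • v
        exact Function.update_self _ _ _
      · rw [hap, hunq i j h, hwn j h, smul_zero, add_zero]
        show Function.update p i (q i + t • v) j = p j
        exact Function.update_of_ne h _ _
    have hnormeq : ∀ t : ℝ, ‖q i + t • v - p i‖^2 = ‖D i‖^2 + 2*t*⟪D i, v⟫ + t^2*‖v‖^2 := by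
      intro t
      have h1 : q i + t • v - p i = (q i - p i) + t • v := by abel
      rw [h1, ← hDap i, norm_add_sq_real, real_inner_smul_right, norm_smul,
        Real.norm_eq_abs, mul_pow, sq_abs]
      ring
    have hφ : HasDerivAt (fun t : ℝ => f (upd p i (q i + t • v)) + c * ‖q i + t • v - p i‖^2)
        (⟪gradient f (u i), w⟫ + c * (2*⟪D i, v⟫)) 0 := by
      apply HasDerivAt.add
      · have h1 : (fun t : ℝ => f (upd p i (q i + t • v))) = fun t => f (u i + t • w) := by
          funext t; rw [hcurve t]
        rw [h1]
        exact hasDerivAt_line hdf (u i) w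
      · have h2 : (fun t : ℝ => c * ‖q i + t • v - p i‖^2)
            = fun t => c * (‖D i‖^2 + 2*t*⟪D i, v⟫ + t^2*‖v‖^2) := by
          funext t; rw [hnormeq t]
        rw [h2]
        have h3 : HasDerivAt (fun t : ℝ => ‖D i‖^2 + 2*t*⟪D i, v⟫ + t^2*‖v‖^2)
            (2*⟪D i, v⟫) 0 := by
          have ha : HasDerivAt (fun t : ℝ => 2*t*⟪D i, v⟫) (2*⟪D i, v⟫) 0 := by
            simpa using ((hasDerivAt_id (0:ℝ)).const_mul 2).mul_const ⟪D i, v⟫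
          have hb : HasDerivAt (fun t : ℝ => t^2*‖v‖^2) 0 0 := by
            simpa using (hasDerivAt_pow 2 (0:ℝ)).mul_const (‖v‖^2)
          have := (ha.const_add (‖D i‖^2)).add hb
          rw [add_zero] at this
          exact this
        exact h3.const_mul c
    have h0le : (0:ℝ) ≤ ⟪gradient f (u i), w⟫ + c * (2*⟪D i, v⟫) := by
      refine le_deriv_slope_aux hφ ?_
      intro t ht
      have hz : q i + t • v ∈ X i := by
        have he : q i + t • v = t • p i + (1 - t) • q i := by rw [hv]; module
        rw [he]
        exact hXcvx i (hp i) (hq i) ht.1.le (by linarith [ht.2]) (by ring)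
      have hopt' := hopt i (q i + t • v) hz
      have he0 : q i + (0:ℝ) • v = q i := by simp
      simp only [he0]
      have : f (upd p i (q i)) = f (u i) := by rw [hu]
      linarith [hopt']
    have hvD : v = -(D i) := by rw [hv, hDap i]; abel
    have hwin : ⟪gradient f (u i), w⟫ = ⟪(gradient f (u i)) i, v⟫ := by
      rw [PiLp.inner_apply]
      rw [Finset.sum_eq_single i]
      · rw [hwi]
      · intro j _ hj
        rw [hwn j hj, inner_zero_right]
      · intro h; exact absurd (Finset.mem_univ i) h
    rw [hwin, hvD, inner_neg_right, inner_neg_right, real_inner_self_eq_norm_sq] at h0le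
    linarith
  -- (v) inner product bound at q
  have hinner : ⟪gradient f q, D⟫ ≤ (Real.sqrt m * L - 2*c) * ‖D‖^2 := by
    have hterm : ∀ i, ⟪(gradient f q) i, D i⟫ ≤ -(2*c)*‖D i‖^2 + (L*‖D‖) * ‖D i‖ := by
      intro i
      have h1 : ⟪(gradient f q) i, D i⟫
          = ⟪(gradient f (u i)) i, D i⟫ + ⟪(gradient f q - gradient f (u i)) i, D i⟫ := by
        rw [PiLp.sub_apply _ (gradient f q), inner_sub_left]; ring
      have h2 : ⟪(gradient f q - gradient f (u i)) i, D i⟫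
          ≤ ‖gradient f q - gradient f (u i)‖ * ‖D i‖ :=
        le_trans (real_inner_le_norm _ _)
          (mul_le_mul_of_nonneg_right (block_norm_le _ i) (norm_nonneg _))
      have h3 : ‖gradient f q - gradient f (u i)‖ ≤ L * ‖q - u i‖ :=
        hLip q (u i) hq (humem i)
      have h4 : ‖q - u i‖ ≤ ‖D‖ := by
        have h5 : ‖q - u i‖^2 ≤ ‖D‖^2 := by
          conv_lhs => rw [PiLp.norm_sq_eq_of_L2]
          conv_rhs => rw [PiLp.norm_sq_eq_of_L2]
          apply Finset.sum_le_sum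
          intro j _
          rcases eq_or_ne j i with h | h
          · subst h
            have h6 : (q - u j) j = 0 := by
              rw [PiLp.sub_apply, huq j, sub_self]
            rw [h6, norm_zero]
            simpa using sq_nonneg ‖D j‖
          · have h6 : (q - u i) j = D j := by
              rw [PiLp.sub_apply, hunq i j h, ← hDap j]
            rw [h6]
        nlinarith [norm_nonneg (q - u i), norm_nonneg D]
      have h7 : ‖gradient f q - gradient f (u i)‖ * ‖D i‖ ≤ (L*‖D‖) * ‖D i‖ :=
        mul_le_mul_of_nonneg_right
          (h3.trans (mul_le_mul_of_nonneg_left h4 hL)) (norm_nonneg _)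
      linarith [hFOC i, h1, h2, h7]
    have hs1 : ⟪gradient f q, D⟫ = ∑ i, ⟪(gradient f q) i, D i⟫ := PiLp.inner_apply _ _
    have hs2 : ∑ i, ⟪(gradient f q) i, D i⟫ ≤ ∑ i, (-(2*c)*‖D i‖^2 + (L*‖D‖)*‖D i‖) :=
      Finset.sum_le_sum (fun i _ => hterm i)
    have hs3 : ∑ i, (-(2*c)*‖D i‖^2 + (L*‖D‖)*‖D i‖)
        = -(2*c)*(∑ i, ‖D i‖^2) + (L*‖D‖)*(∑ i, ‖D i‖) := by
      rw [Finset.sum_add_distrib, ← Finset.mul_sum, ← Finset.mul_sum]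
    have hDsq : (∑ i, ‖D i‖^2) = ‖D‖^2 := (PiLp.norm_sq_eq_of_L2 _ D).symm
    rw [hDsq] at hs3
    have hs4 : ∑ i, ‖D i‖ ≤ Real.sqrt m * ‖D‖ := by
      have h6 : (∑ i, ‖D i‖)^2 ≤ (m:ℝ) * ‖D‖^2 := by
        have h7 := sq_sum_le_card_mul_sum_sq (s := Finset.univ) (f := fun i => ‖D i‖)
        rw [Finset.card_univ, Fintype.card_fin] at h7
        rw [← hDsq]
        exact_mod_cast h7
      have hS0 : (0:ℝ) ≤ ∑ i, ‖D i‖ :=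
        Finset.sum_nonneg (fun i _ => norm_nonneg (D i))
      calc (∑ i, ‖D i‖) = Real.sqrt ((∑ i, ‖D i‖)^2) := (Real.sqrt_sq hS0).symm
        _ ≤ Real.sqrt ((m:ℝ) * ‖D‖^2) := Real.sqrt_le_sqrt h6
        _ = Real.sqrt m * ‖D‖ := by
            rw [Real.sqrt_mul (by positivity), Real.sqrt_sq (norm_nonneg D)]
    have hs5 : (L*‖D‖) * (∑ i, ‖D i‖) ≤ (L*‖D‖) * (Real.sqrt m * ‖D‖) :=
      mul_le_mul_of_nonneg_left hs4 (by positivity)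
    linarith [hs1, hs2, hs3, hs5]
  -- (vi) convexity bound
  have hcv : f q ≤ f (p + μ • D) + (1-μ)*⟪gradient f q, D⟫ := by
    have h1 := grad_convex_ineq hdf hfc q (p + μ • D)
    have h2 : p + μ • D - q = (μ - 1) • D := by
      rw [hD]; module
    rw [h2, real_inner_smul_right] at h1
    linarith
  -- conclude
  have h1μ : (0:ℝ) ≤ 1 - μ := by linarith
  have h8 : (1-μ)*⟪gradient f q, D⟫ ≤ (1-μ)*((Real.sqrt m * L - 2*c)*‖D‖^2) :=
    mul_le_mul_of_nonneg_left hinner h1μ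
  have hβeq : (((2*(m:ℝ)-1)*c - ((m:ℝ)-1)*(Real.sqrt m * L)) / m)
      = c*μ - (1-μ)*(Real.sqrt m*L - 2*c) := by
    rw [hμ]
    field_simp
    ring
  have hqp : ‖q - p‖ = ‖D‖ := by rw [hD]
  rw [hβeq, hqp]
  linarith [hcv, havg, h8]

/-- If `c > ((m−1)/(2m−1))·√m·L`, the regularized Jacobi iterates satisfy
`Σₖ ‖x_{k+1} − x_k‖² < ∞`, and in particular `‖x_{k+1} − x_k‖ → 0`. -/
theorem stmt_19 {m : ℕ} {n : Fin m → ℕ}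
    (X : ∀ i : Fin m, Set (EuclideanSpace ℝ (Fin (n i))))
    (hXne : ∀ i, (X i).Nonempty)
    (hXcpt : ∀ i, IsCompact (X i))
    (hXcvx : ∀ i, Convex ℝ (X i))
    (f : JVec m n → ℝ)
    (hf : ContDiff ℝ 1 f)
    (hfc : ConvexOn ℝ Set.univ f)
    (L : ℝ) (hL : 0 < L)
    (hLip : ∀ a b : JVec m n, (∀ i, a i ∈ X i) → (∀ i, b i ∈ X i) →
      ‖gradient f a - gradient f b‖ ≤ L * ‖a - b‖)
    (c : ℝ) (hc : ((m : ℝ) - 1) / (2 * m - 1) * (Real.sqrt m * L) < c)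
    (x : ℕ → JVec m n) (hx0 : ∀ i, x 0 i ∈ X i)
    (hrec : ∀ k : ℕ, ∀ i : Fin m, x (k + 1) i ∈ X i ∧
      ∀ z ∈ X i,
        f (upd (x k) i (x (k + 1) i)) + c * ‖x (k + 1) i - x k i‖ ^ 2 ≤
          f (upd (x k) i z) + c * ‖z - x k i‖ ^ 2) :
    Summable (fun k : ℕ => ‖x (k + 1) - x k‖ ^ 2) ∧
      Tendsto (fun k : ℕ => ‖x (k + 1) - x k‖) atTop (𝓝 0) := by
  classical
  have hdf : Differentiable ℝ f := hf.differentiable one_ne_zero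
  rcases Nat.eq_zero_or_pos m with hm0 | hm
  · have hz : ∀ k : ℕ, ‖x (k+1) - x k‖ = 0 := by
      intro k
      have h2 : ‖x (k+1) - x k‖^2 = 0 := by
        rw [PiLp.norm_sq_eq_of_L2]
        apply Finset.sum_eq_zero
        intro i _
        exact absurd i.2 (by omega)
      nlinarith [norm_nonneg (x (k+1) - x k)]
    constructor
    · have he : (fun k : ℕ => ‖x (k+1) - x k‖^2) = fun _ => 0 := by
        funext k; rw [hz k]; ring
      rw [he]; exact summable_zero
    · have he : (fun k : ℕ => ‖x (k+1) - x k‖) = fun _ => 0 := funext hz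
      rw [he]; exact tendsto_const_nhds
  -- m ≥ 1
  have hm1 : (1:ℝ) ≤ (m:ℝ) := by exact_mod_cast hm
  have hmpos : (0:ℝ) < m := by linarith
  have h2m : (0:ℝ) < 2*(m:ℝ)-1 := by linarith
  set β : ℝ := ((2*(m:ℝ)-1)*c - ((m:ℝ)-1)*(Real.sqrt m * L)) / m with hβ
  have hβpos : 0 < β := by
    apply div_pos _ hmpos
    rw [div_mul_eq_mul_div, div_lt_iff₀ h2m] at hc
    linarith
  have hmem : ∀ k i, x k i ∈ X i := by
    intro k
    induction k with
    | zero => exact hx0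
    | succ k ih => exact fun i => (hrec k i).1
  have key : ∀ k : ℕ, f (x (k+1)) + β * ‖x (k+1) - x k‖^2 ≤ f (x k) := by
    intro k
    exact jacobi_descent hm X hXcvx f hdf hfc L c hL.le hLip (x k) (x (k+1))
      (hmem k) (hmem (k+1)) (fun i z hz => (hrec k i).2 z hz)
  -- lower bound via compactness
  obtain ⟨y₀, hy₀K, hy₀min⟩ :
      ∃ y₀ : JVec m n, (∀ i, y₀ i ∈ X i) ∧ ∀ y : JVec m n, (∀ i, y i ∈ X i) → f y₀ ≤ f y := by
    have hH : IsCompact {y : JVec m n | ∀ i, y i ∈ X i} := by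
      have h1 : IsCompact (Set.univ.pi X) := isCompact_univ_pi hXcpt
      have h2 : {y : JVec m n | ∀ i, y i ∈ X i}
          = (PiLp.continuousLinearEquiv 2 ℝ
              (fun i : Fin m => EuclideanSpace ℝ (Fin (n i)))).toHomeomorph ⁻¹' (Set.univ.pi X) := by
        ext y
        simp [Set.mem_pi]
      rw [h2]
      exact (Homeomorph.isCompact_preimage _).2 h1
    have hne : {y : JVec m n | ∀ i, y i ∈ X i}.Nonempty :=
      ⟨WithLp.toLp 2 (fun i => (hXne i).some : ∀ i, EuclideanSpace ℝ (Fin (n i))), fun i => (hXne i).some_mem⟩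
    obtain ⟨y₀, hy₀, hmin⟩ := hH.exists_isMinOn hne hf.continuous.continuousOn
    exact ⟨y₀, hy₀, fun y hy => hmin hy⟩
  have hpartial : ∀ N : ℕ, f (x N) + β * ∑ k ∈ Finset.range N, ‖x (k+1) - x k‖^2 ≤ f (x 0) := by
    intro N
    induction N with
    | zero => simp
    | succ N ih =>
      rw [Finset.sum_range_succ]
      have h1 := key N
      have h2 : β * (∑ k ∈ Finset.range N, ‖x (k+1) - x k‖^2 + ‖x (N+1) - x N‖^2)
          = β * ∑ k ∈ Finset.range N, ‖x (k+1) - x k‖^2 + β * ‖x (N+1) - x N‖^2 := by ring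
      rw [h2]
      linarith
  have hsummable : Summable (fun k : ℕ => ‖x (k+1) - x k‖^2) := by
    apply summable_of_sum_range_le (c := (f (x 0) - f y₀)/β) (fun k => sq_nonneg _)
    intro N
    rw [le_div_iff₀ hβpos]
    have h1 := hpartial N
    have h2 := hy₀min (x N) (hmem N)
    nlinarith
  refine ⟨hsummable, ?_⟩
  have h0 := hsummable.tendsto_atTop_zero
  have h1 : Tendsto (fun k : ℕ => Real.sqrt (‖x (k+1) - x k‖^2)) atTop (𝓝 (Real.sqrt 0)) :=
    (Real.continuous_sqrt.continuousAt).tendsto.comp h0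
  have h2 : (fun k : ℕ => Real.sqrt (‖x (k+1) - x k‖^2)) = fun k => ‖x (k+1) - x k‖ :=
    funext fun k => Real.sqrt_sq (norm_nonneg _)
  rw [h2, Real.sqrt_zero] at h1
  exact h1
end
end
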